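/- arXiv:1404.2957 — 2 statements merged into one kernel-verified Lean document; each statement's English description precedes it below -/
import Mathlib

section
/- If Z is a Poisson random variable with mean μ ∈ (0,∞), then μ log μ ≤ E[Z log Z] ≤ μ log μ + 1, where 0 log 0 is interpreted as 0. -/
open Real

namespace PoissonEntropyAux

variable (μ : ℝ)

/-- The Poisson weight. -/
noncomputable def f (k : ℕ) : ℝ := Real.exp (-μ) * μ ^ k / (Nat.factorial k)

lemma f_nonneg (hμ : 0 < μ) (k : ℕ) : 0 ≤ f μ k := by
  unfold f; positivity

lemma f_shift (k : ℕ) : ((k : ℝ) + 1) * f μ (k + 1) = μ * f μ k := by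
  unfold f
  rw [Nat.factorial_succ, pow_succ]
  have h1 : ((Nat.factorial k : ℝ)) ≠ 0 := Nat.cast_ne_zero.mpr (Nat.factorial_ne_zero k)
  have h2 : ((k : ℝ) + 1) ≠ 0 := by positivity
  push_cast
  field_simp

lemma summable_f : Summable (f μ) :=
  ((Real.summable_pow_div_factorial μ).mul_left (Real.exp (-μ))).congr
    (fun k => by unfold f; ring)

lemma tsum_f (_hμ : 0 < μ) : ∑' k, f μ k = 1 := by
  unfold f
  have : ∀ k : ℕ, Real.exp (-μ) * μ ^ k / (Nat.factorial k)
      = Real.exp (-μ) * (μ ^ k / (Nat.factorial k)) := fun k => by ring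
  simp only [this]
  rw [tsum_mul_left]
  have hexp : ∑' k : ℕ, μ ^ k / (Nat.factorial k) = Real.exp μ := by
    rw [Real.exp_eq_exp_ℝ, NormedSpace.exp_eq_tsum_div]
  rw [hexp, ← Real.exp_add]
  simp

lemma summable_kf : Summable (fun k : ℕ => (k : ℝ) * f μ k) := by
  rw [← summable_nat_add_iff 1]
  have : (fun k : ℕ => ((k + 1 : ℕ) : ℝ) * f μ (k + 1)) = fun k : ℕ => μ * f μ k := by
    funext k; push_cast; rw [f_shift]
  rw [this]
  exact (summable_f μ).mul_left _

lemma tsum_kf (hμ : 0 < μ) : ∑' k : ℕ, (k : ℝ) * f μ k = μ := by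
  rw [Summable.tsum_eq_zero_add (summable_kf μ)]
  have : (fun k : ℕ => ((k + 1 : ℕ) : ℝ) * f μ (k + 1)) = fun k : ℕ => μ * f μ k := by
    funext k; push_cast; rw [f_shift]
  simp only [this]
  rw [tsum_mul_left, tsum_f μ hμ]
  simp

lemma summable_k2f : Summable (fun k : ℕ => (k : ℝ) * ((k : ℝ) - 1) * f μ k) := by
  rw [← summable_nat_add_iff 1]
  have : (fun k : ℕ => ((k + 1 : ℕ) : ℝ) * (((k + 1 : ℕ) : ℝ) - 1) * f μ (k + 1))
      = fun k : ℕ => μ * ((k : ℝ) * f μ k) := by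
    funext k; push_cast
    have := f_shift μ k
    nlinarith [f_shift μ k]
  rw [this]
  exact (summable_kf μ).mul_left _

lemma tsum_k2f (hμ : 0 < μ) : ∑' k : ℕ, (k : ℝ) * ((k : ℝ) - 1) * f μ k = μ ^ 2 := by
  rw [Summable.tsum_eq_zero_add (summable_k2f μ)]
  have : (fun k : ℕ => ((k + 1 : ℕ) : ℝ) * (((k + 1 : ℕ) : ℝ) - 1) * f μ (k + 1))
      = fun k : ℕ => μ * ((k : ℝ) * f μ k) := by
    funext k; push_cast
    nlinarith [f_shift μ k]
  simp only [this]
  rw [tsum_mul_left, tsum_kf μ hμ]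
  simp [sq]

lemma klogk_nonneg (k : ℕ) : 0 ≤ (k : ℝ) * Real.log k := by
  rcases Nat.eq_zero_or_pos k with h | h
  · simp [h]
  · have hk : (1 : ℝ) ≤ (k : ℝ) := by exact_mod_cast h
    have := Real.log_nonneg hk
    positivity

lemma klogk_le (k : ℕ) : (k : ℝ) * Real.log k ≤ (k : ℝ) * ((k : ℝ) - 1) + (k : ℝ) := by
  rcases Nat.eq_zero_or_pos k with h | h
  · simp [h]
  · have hk : (0 : ℝ) < (k : ℝ) := by exact_mod_cast h
    have hlog : Real.log k ≤ (k : ℝ) - 1 := Real.log_le_sub_one_of_pos hk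
    nlinarith

lemma summable_klogkf (hμ : 0 < μ) :
    Summable (fun k : ℕ => ((k : ℝ) * Real.log k) * f μ k) := by
  have hg : Summable (fun k : ℕ => (k : ℝ) * ((k : ℝ) - 1) * f μ k + (k : ℝ) * f μ k) :=
    (summable_k2f μ).add (summable_kf μ)
  refine Summable.of_nonneg_of_le
    (fun k => mul_nonneg (klogk_nonneg k) (f_nonneg μ hμ k)) (fun k => ?_) hg
  nlinarith [mul_le_mul_of_nonneg_right (klogk_le k) (f_nonneg μ hμ k)]

end PoissonEntropyAux

open PoissonEntropyAux in
/-- If `Z ~ Poisson(μ)` with `μ ∈ (0,∞)`, then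
`μ log μ ≤ E[Z log Z] ≤ μ log μ + 1`, where `0 log 0 = 0`
(automatic since `Real.log 0 = 0`). -/
theorem poisson_entropy_bounds (μ : ℝ) (hμ : 0 < μ) :
    μ * Real.log μ ≤
      ∑' k : ℕ, (k * Real.log k) * (Real.exp (-μ) * μ ^ k / (Nat.factorial k)) ∧
    ∑' k : ℕ, (k * Real.log k) * (Real.exp (-μ) * μ ^ k / (Nat.factorial k)) ≤
      μ * Real.log μ + 1 := by
  have hEq : (fun k : ℕ => ((k : ℝ) * Real.log k) * (Real.exp (-μ) * μ ^ k / (Nat.factorial k)))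
      = fun k : ℕ => ((k : ℝ) * Real.log k) * f μ k := rfl
  have hS := summable_klogkf μ hμ
  constructor
  · -- lower bound: pointwise k log μ + k - μ ≤ k log k
    have hpoint : ∀ k : ℕ,
        Real.log μ * ((k : ℝ) * f μ k) + ((k : ℝ) * f μ k) - μ * f μ k
          ≤ ((k : ℝ) * Real.log k) * f μ k := by
      intro k
      have hf := f_nonneg μ hμ k
      have hkey : (k : ℝ) * Real.log μ + (k : ℝ) - μ ≤ (k : ℝ) * Real.log k := by
        rcases Nat.eq_zero_or_pos k with h | h
        · simp [h]; linarith
        · have hk : (0 : ℝ) < (k : ℝ) := by exact_mod_cast h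
          have hpos : (0 : ℝ) < μ / (k : ℝ) := by positivity
          have hlog : Real.log (μ / (k : ℝ)) ≤ μ / (k : ℝ) - 1 :=
            Real.log_le_sub_one_of_pos hpos
          rw [Real.log_div (ne_of_gt hμ) (ne_of_gt hk)] at hlog
          have := mul_le_mul_of_nonneg_left hlog (le_of_lt hk)
          rw [mul_sub] at this
          have hdiv : (k : ℝ) * (μ / (k : ℝ)) = μ := by field_simp
          nlinarith
      nlinarith
    have hSr : Summable (fun k : ℕ =>
        Real.log μ * ((k : ℝ) * f μ k) + ((k : ℝ) * f μ k) - μ * f μ k) :=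
      (((summable_kf μ).mul_left _).add (summable_kf μ)).sub ((summable_f μ).mul_left _)
    have := Summable.tsum_le_tsum hpoint hSr hS
    rw [Summable.tsum_sub (((summable_kf μ).mul_left _).add (summable_kf μ)) ((summable_f μ).mul_left _),
      Summable.tsum_add ((summable_kf μ).mul_left _) (summable_kf μ),
      tsum_mul_left, tsum_mul_left, tsum_kf μ hμ, tsum_f μ hμ] at this
    rw [hEq]
    calc μ * Real.log μ = Real.log μ * μ + μ - μ * 1 := by ring
      _ ≤ _ := this
  · -- upper bound
    have h1μ : (0 : ℝ) < 1 + μ := by linarith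
    have hpoint : ∀ k : ℕ,
        ((k : ℝ) * Real.log k) * f μ k ≤
          Real.log (1 + μ) * ((k : ℝ) * f μ k) +
            (1 / (1 + μ)) * ((k : ℝ) * ((k : ℝ) - 1) * f μ k) -
            (μ / (1 + μ)) * ((k : ℝ) * f μ k) := by
      intro k
      have hf := f_nonneg μ hμ k
      have hkey : (k : ℝ) * Real.log k ≤
          (k : ℝ) * Real.log (1 + μ) + ((k : ℝ) * ((k : ℝ) - 1) - μ * (k : ℝ)) / (1 + μ) := by
        rcases Nat.eq_zero_or_pos k with h | h
        · simp [h]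
        · have hk : (0 : ℝ) < (k : ℝ) := by exact_mod_cast h
          have hpos : (0 : ℝ) < (k : ℝ) / (1 + μ) := by positivity
          have hlog : Real.log ((k : ℝ) / (1 + μ)) ≤ (k : ℝ) / (1 + μ) - 1 :=
            Real.log_le_sub_one_of_pos hpos
          rw [Real.log_div (ne_of_gt hk) (ne_of_gt h1μ)] at hlog
          have hmul := mul_le_mul_of_nonneg_left hlog (le_of_lt hk)
          have hexp : (k : ℝ) * ((k : ℝ) / (1 + μ) - 1)
              = ((k : ℝ) * ((k : ℝ) - 1) - μ * (k : ℝ)) / (1 + μ) := by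
            field_simp; ring
          rw [hexp, mul_sub] at hmul
          linarith
      have h2 : ((k : ℝ) * ((k : ℝ) - 1) - μ * (k : ℝ)) / (1 + μ) * f μ k
          = (1 / (1 + μ)) * ((k : ℝ) * ((k : ℝ) - 1) * f μ k)
            - (μ / (1 + μ)) * ((k : ℝ) * f μ k) := by
        field_simp
      calc ((k : ℝ) * Real.log k) * f μ k
          ≤ ((k : ℝ) * Real.log (1 + μ) + ((k : ℝ) * ((k : ℝ) - 1) - μ * (k : ℝ)) / (1 + μ))
              * f μ k := mul_le_mul_of_nonneg_right hkey hf
        _ = Real.log (1 + μ) * ((k : ℝ) * f μ k)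
              + ((k : ℝ) * ((k : ℝ) - 1) - μ * (k : ℝ)) / (1 + μ) * f μ k := by ring
        _ = _ := by rw [h2]; ring
    have hSr : Summable (fun k : ℕ =>
        Real.log (1 + μ) * ((k : ℝ) * f μ k) +
          (1 / (1 + μ)) * ((k : ℝ) * ((k : ℝ) - 1) * f μ k) -
          (μ / (1 + μ)) * ((k : ℝ) * f μ k)) :=
      (((summable_kf μ).mul_left _).add ((summable_k2f μ).mul_left _)).sub
        ((summable_kf μ).mul_left _)
    have hle := Summable.tsum_le_tsum hpoint hS hSr
    rw [Summable.tsum_sub (((summable_kf μ).mul_left _).add ((summable_k2f μ).mul_left _))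
        ((summable_kf μ).mul_left _),
      Summable.tsum_add ((summable_kf μ).mul_left _) ((summable_k2f μ).mul_left _),
      tsum_mul_left, tsum_mul_left, tsum_mul_left, tsum_kf μ hμ, tsum_k2f μ hμ] at hle
    have hrhs : Real.log (1 + μ) * μ + 1 / (1 + μ) * μ ^ 2 - μ / (1 + μ) * μ
        = μ * Real.log (1 + μ) := by field_simp; ring
    rw [hrhs] at hle
    rw [hEq]
    refine hle.trans ?_
    -- μ log(1+μ) ≤ μ log μ + 1
    have hlog : Real.log ((1 + μ) / μ) ≤ (1 + μ) / μ - 1 :=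
      Real.log_le_sub_one_of_pos (by positivity)
    rw [Real.log_div (ne_of_gt h1μ) (ne_of_gt hμ)] at hlog
    have h3 : (1 + μ) / μ - 1 = 1 / μ := by field_simp; ring
    rw [h3] at hlog
    have := mul_le_mul_of_nonneg_left hlog (le_of_lt hμ)
    rw [mul_sub] at this
    have h4 : μ * (1 / μ) = 1 := by field_simp
    nlinarith
end

section
/- Fix a > 0 and d ≥ 1. There exists a finite collection C_a of disjoint compact subsets of [−2a,2a]^d, each of Lebesgue measure at least (a/(2d))^d, such that for every additive function f(x) = Σ_{j=1}^d fⱼ(xⱼ) + c with each fⱼ satisfying fⱼ(0) = 0 and being linear, monotone, convex, or concave (possibly combined with monotonicity), we have max over C ∈ C_a of max(inf_{x∈C} f(x), inf_{x∈C} −f(x)) ≥ (1/4)·max{sup_{|x₁|≤a}|f₁(x₁)|, ..., sup_{|x_d|≤a}|f_d(x_d)|, 2|c|}. -/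
open MeasureTheory

/-- A function satisfies one of the nine shape constraints: linear; monotone
increasing; monotone decreasing; convex; convex increasing; convex decreasing;
concave; concave increasing; concave decreasing. -/
def Shaped (g : ℝ → ℝ) : Prop :=
  (∃ b : ℝ, ∀ x, g x = b * x) ∨
  Monotone g ∨ Antitone g ∨
  ConvexOn ℝ Set.univ g ∨ (ConvexOn ℝ Set.univ g ∧ Monotone g) ∨
  (ConvexOn ℝ Set.univ g ∧ Antitone g) ∨
  ConcaveOn ℝ Set.univ g ∨ (ConcaveOn ℝ Set.univ g ∧ Monotone g) ∨
  (ConcaveOn ℝ Set.univ g ∧ Antitone g)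

namespace Lemma2Aux

lemma lin_convex (b : ℝ) : ConvexOn ℝ Set.univ (fun x : ℝ => b * x) := by
  refine ⟨convex_univ, ?_⟩
  intro x _ y _ p q _ _ _
  simp only [smul_eq_mul]
  apply le_of_eq; ring

lemma shaped_cases {g : ℝ → ℝ} (h : Shaped g) :
    Monotone g ∨ Antitone g ∨ ConvexOn ℝ Set.univ g ∨ ConcaveOn ℝ Set.univ g := by
  rcases h with ⟨b, hb⟩ | h | h | h | ⟨h, _⟩ | ⟨h, _⟩ | h | ⟨h, _⟩ | ⟨h, _⟩
  · right; right; left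
    have : g = fun x => b * x := funext hb
    rw [this]; exact lin_convex b
  all_goals tauto

variable {g : ℝ → ℝ}

lemma H2 (hg : ConvexOn ℝ Set.univ g) (h0 : g 0 = 0) {lam : ℝ} (h1 : 0 ≤ lam)
    (h2 : lam ≤ 1) (u : ℝ) : g (lam * u) ≤ lam * g u := by
  have h := hg.2 (Set.mem_univ u) (Set.mem_univ (0:ℝ)) h1 (by linarith : (0:ℝ) ≤ 1 - lam)
    (by ring)
  simpa [smul_eq_mul, h0] using h

lemma H1 (hg : ConvexOn ℝ Set.univ g) (h0 : g 0 = 0) {r : ℝ} (hr : 1 ≤ r) (u : ℝ) :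
    r * g u ≤ g (r * u) := by
  have hr0 : 0 < r := lt_of_lt_of_le one_pos hr
  have h := H2 hg h0 (le_of_lt (by positivity : (0:ℝ) < 1/r))
    (by rw [div_le_one hr0]; exact hr) (r * u)
  have he : 1/r * (r * u) = u := by field_simp
  rw [he] at h
  -- h : g u ≤ 1/r * g (r*u)
  have := mul_le_mul_of_nonneg_left h hr0.le
  calc r * g u ≤ r * (1/r * g (r * u)) := this
    _ = g (r * u) := by field_simp

lemma H4 (hg : ConvexOn ℝ Set.univ g) (h0 : g 0 = 0) (t : ℝ) : -g (-t) ≤ g t := by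
  have h := hg.2 (Set.mem_univ t) (Set.mem_univ (-t))
    (by norm_num : (0:ℝ) ≤ 1/2) (by norm_num : (0:ℝ) ≤ 1/2) (by norm_num)
  have he : (1/2 : ℝ) • t + (1/2 : ℝ) • (-t) = 0 := by
    simp only [smul_eq_mul]
    ring
  rw [he, h0, smul_eq_mul, smul_eq_mul] at h
  linarith

/-- cross-zero: for `0 < u`, `0 ≤ t`, `-(t/u) * g u ≤ g (-t)`. -/
lemma H3 (hg : ConvexOn ℝ Set.univ g) (h0 : g 0 = 0) {u t : ℝ} (hu : 0 < u) (ht : 0 ≤ t) :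
    -(t/u) * g u ≤ g (-t) := by
  have hs : 0 < u + t := by linarith
  have h := hg.2 (Set.mem_univ (-t)) (Set.mem_univ u)
    (div_nonneg hu.le hs.le) (div_nonneg ht hs.le) (by field_simp)
  have he : (u/(u+t)) • (-t) + (t/(u+t)) • u = 0 := by
    simp only [smul_eq_mul]
    field_simp
    ring
  rw [he, h0, smul_eq_mul, smul_eq_mul] at h
  -- h : 0 ≤ u/(u+t) * g (-t) + t/(u+t) * g u
  have key : 0 ≤ u * g (-t) + t * g u := by
    have h5 := mul_le_mul_of_nonneg_left h hs.le
    rw [mul_zero] at h5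
    have he2 : (u+t) * (u/(u+t) * g (-t) + t/(u+t) * g u) = u * g (-t) + t * g u := by
      field_simp
    linarith [he2 ▸ h5]
  have h4 : -(t * g u) ≤ u * g (-t) := by linarith
  calc -(t/u) * g u = (-(t * g u))/u := by ring
    _ ≤ (u * g (-t))/u := by gcongr
    _ = g (-t) := by field_simp

/-- mirrored cross-zero: for `0 < u`, `0 ≤ t`, `-(t/u) * g (-u) ≤ g t`. -/
lemma H3' (hg : ConvexOn ℝ Set.univ g) (h0 : g 0 = 0) {u t : ℝ} (hu : 0 < u) (ht : 0 ≤ t) :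
    -(t/u) * g (-u) ≤ g t := by
  have hs : 0 < u + t := by linarith
  have h := hg.2 (Set.mem_univ t) (Set.mem_univ (-u))
    (div_nonneg hu.le hs.le) (div_nonneg ht hs.le) (by field_simp)
  have he : (u/(u+t)) • t + (t/(u+t)) • (-u) = 0 := by
    simp only [smul_eq_mul]
    field_simp
    ring
  rw [he, h0, smul_eq_mul, smul_eq_mul] at h
  have key : 0 ≤ u * g t + t * g (-u) := by
    have h5 := mul_le_mul_of_nonneg_left h hs.le
    rw [mul_zero] at h5
    have he2 : (u+t) * (u/(u+t) * g t + t/(u+t) * g (-u)) = u * g t + t * g (-u) := by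
      field_simp
    linarith [he2 ▸ h5]
  have h4 : -(t * g (-u)) ≤ u * g t := by linarith
  calc -(t/u) * g (-u) = (-(t * g (-u)))/u := by ring
    _ ≤ (u * g t)/u := by gcongr
    _ = g t := by field_simp


/-- uniform bound on `[-a,a]` for shaped functions. -/
lemma shaped_abs_bound {g : ℝ → ℝ} {a : ℝ} (ha : 0 < a) (hs : Shaped g) (h0 : g 0 = 0) :
    ∀ t ∈ Set.Icc (-a) a, |g t| ≤ max |g a| |g (-a)| := by
  have haux : ∀ h : ℝ → ℝ, ConvexOn ℝ Set.univ h → h 0 = 0 →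
      ∀ t ∈ Set.Icc (-a) a, h t ≤ max |h a| |h (-a)| := by
    intro h hconv hz t ht
    obtain ⟨ht1, ht2⟩ := ht
    have hl : (0:ℝ) ≤ (t + a)/(2*a) := div_nonneg (by linarith) (by linarith)
    have hl2 : (t + a)/(2*a) ≤ 1 := by rw [div_le_one (by linarith)]; linarith
    have hc := hconv.2 (Set.mem_univ a) (Set.mem_univ (-a)) hl
      (by linarith : (0:ℝ) ≤ 1 - (t + a)/(2*a)) (by ring)
    have he : ((t + a)/(2*a)) • a + (1 - (t + a)/(2*a)) • (-a) = t := by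
      simp only [smul_eq_mul]
      field_simp
      ring
    rw [he, smul_eq_mul, smul_eq_mul] at hc
    have h1 : h a ≤ max |h a| |h (-a)| := le_trans (le_abs_self _) (le_max_left _ _)
    have h2 : h (-a) ≤ max |h a| |h (-a)| := le_trans (le_abs_self _) (le_max_right _ _)
    nlinarith
  rcases shaped_cases hs with hm | hm | hm | hm
  · intro t ⟨ht1, ht2⟩
    rw [abs_le]
    have h1 : g t ≤ g a := hm ht2
    have h2 : g (-a) ≤ g t := hm ht1
    constructor
    · have : -|g (-a)| ≤ g (-a) := neg_abs_le _
      have := le_trans (neg_le_neg (le_max_right |g a| |g (-a)|)) this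
      linarith
    · exact le_trans h1 (le_trans (le_abs_self _) (le_max_left _ _))
  · intro t ⟨ht1, ht2⟩
    rw [abs_le]
    have h1 : g a ≤ g t := hm ht2
    have h2 : g t ≤ g (-a) := hm ht1
    constructor
    · have : -|g a| ≤ g a := neg_abs_le _
      have := le_trans (neg_le_neg (le_max_left |g a| |g (-a)|)) this
      linarith
    · exact le_trans h2 (le_trans (le_abs_self _) (le_max_right _ _))
  · intro t ht
    rw [abs_le]
    refine ⟨?_, haux g hm h0 t ht⟩
    have hmt : -t ∈ Set.Icc (-a) a := by
      obtain ⟨h1, h2⟩ := ht; constructor <;> linarith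
    have := haux g hm h0 (-t) hmt
    have h4 := H4 hm h0 t
    linarith
  · intro t ht
    have hneg := hm.neg
    have hz : (-g) 0 = 0 := by simp [h0]
    have habs : |(-g) a| = |g a| := by simp
    have habs2 : |(-g) (-a)| = |g (-a)| := by simp
    rw [abs_le]
    constructor
    · have := haux (-g) hneg hz t ht
      simp only [Pi.neg_apply, abs_neg] at this
      linarith
    · have hmt : -t ∈ Set.Icc (-a) a := by
        obtain ⟨h1, h2⟩ := ht; constructor <;> linarith
      have := haux (-g) hneg hz (-t) hmt
      simp only [Pi.neg_apply, abs_neg] at this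
      have h4 := H4 hneg hz t
      simp only [Pi.neg_apply, neg_neg] at h4
      linarith

/-- convex small-interval upper bound. -/
lemma convex_small_upper {g : ℝ → ℝ} {a δ m : ℝ} (hg : ConvexOn ℝ Set.univ g)
    (h0 : g 0 = 0) (ha : 0 < a) (hδ0 : 0 ≤ δ) (hδa : δ ≤ a)
    (hma : |g a| ≤ m) (hmb : |g (-a)| ≤ m) :
    ∀ t ∈ Set.Icc (-δ) δ, g t ≤ (δ/a) * m := by
  intro t ⟨ht1, ht2⟩
  have hm0 : 0 ≤ m := le_trans (abs_nonneg _) hma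
  have hga : g a ≤ m := le_trans (le_abs_self _) hma
  have hgb : g (-a) ≤ m := le_trans (le_abs_self _) hmb
  have hδa' : 0 ≤ δ/a := div_nonneg hδ0 ha.le
  have hδm : (0:ℝ) ≤ (δ/a) * m := mul_nonneg hδa' hm0
  rcases le_or_gt 0 t with h | h
  · have hta : 0 ≤ t/a := div_nonneg h ha.le
    have := H2 hg h0 hta (by rw [div_le_one ha]; linarith) a
    have he : t/a * a = t := by field_simp
    rw [he] at this
    have h2 : t/a * g a ≤ (δ/a) * m := by
      rcases le_or_gt 0 (g a) with hg1 | hg1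
      · exact mul_le_mul (by gcongr) hga hg1 hδa'
      · have h3 : t/a * g a ≤ 0 := mul_nonpos_of_nonneg_of_nonpos hta hg1.le
        linarith
    linarith
  · have hta : 0 ≤ (-t)/a := div_nonneg (by linarith) ha.le
    have := H2 hg h0 hta (by rw [div_le_one ha]; linarith) (-a)
    have he : (-t)/a * (-a) = t := by field_simp
    rw [he] at this
    have h2 : (-t)/a * g (-a) ≤ (δ/a) * m := by
      rcases le_or_gt 0 (g (-a)) with hg1 | hg1
      · exact mul_le_mul (by gcongr; linarith) hgb hg1 hδa'
      · have h3 : (-t)/a * g (-a) ≤ 0 := mul_nonpos_of_nonneg_of_nonpos hta hg1.le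
        linarith
    linarith

lemma convex_small_lower {g : ℝ → ℝ} {a δ m : ℝ} (hg : ConvexOn ℝ Set.univ g)
    (h0 : g 0 = 0) (ha : 0 < a) (hδ0 : 0 ≤ δ) (hδa : δ ≤ a)
    (hma : |g a| ≤ m) (hmb : |g (-a)| ≤ m) :
    ∀ t ∈ Set.Icc (-δ) δ, -((δ/a) * m) ≤ g t := by
  intro t ⟨ht1, ht2⟩
  have := convex_small_upper hg h0 ha hδ0 hδa hma hmb (-t) ⟨by linarith, by linarith⟩
  have h4 := H4 hg h0 t
  linarith

/-- the key large-interval lemma. -/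
lemma keyB {g : ℝ → ℝ} {a m : ℝ} (ha : 0 < a) (hs : Shaped g) (h0 : g 0 = 0)
    (hm : m ≤ max |g a| |g (-a)|) (hm0 : 0 ≤ m) :
    (∀ t ∈ Set.Icc a (2*a), m ≤ g t) ∨ (∀ t ∈ Set.Icc (-(2*a)) (-a), m ≤ g t) ∨
    (∀ t ∈ Set.Icc a (2*a), g t ≤ -m) ∨ (∀ t ∈ Set.Icc (-(2*a)) (-a), g t ≤ -m) := by
  have hconvex : ∀ h : ℝ → ℝ, ConvexOn ℝ Set.univ h → h 0 = 0 →
      m ≤ max |h a| |h (-a)| →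
      (∀ t ∈ Set.Icc a (2*a), m ≤ h t) ∨ (∀ t ∈ Set.Icc (-(2*a)) (-a), m ≤ h t) := by
    intro h hg hz hmm
    rcases le_max_iff.mp hmm with h1 | h1
    · rcases le_abs.mp h1 with h2 | h2
      · -- m ≤ h a : on the right
        left
        intro t ⟨ht1, ht2⟩
        have hr : 1 ≤ t/a := (one_le_div ha).mpr ht1
        have := H1 hg hz hr a
        have he : t/a * a = t := by field_simp
        rw [he] at this
        nlinarith
      · -- m ≤ -h a : on the left
        right
        intro t ⟨ht1, ht2⟩
        have := H3 hg hz ha (by linarith : (0:ℝ) ≤ -t)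
        -- : -(-t/a) * h a ≤ h (-(-t))
        have he : -(-t) = t := by ring
        rw [he] at this
        have hr : 1 ≤ (-t)/a := (one_le_div ha).mpr (by linarith)
        nlinarith
    · rcases le_abs.mp h1 with h2 | h2
      · -- m ≤ h (-a) : on the left
        right
        intro t ⟨ht1, ht2⟩
        have hr : 1 ≤ (-t)/a := (one_le_div ha).mpr (by linarith)
        have := H1 hg hz hr (-a)
        have he : (-t)/a * (-a) = t := by field_simp
        rw [he] at this
        nlinarith
      · -- m ≤ -h (-a) : on the right
        left
        intro t ⟨ht1, ht2⟩
        have := H3' hg hz ha (by linarith : (0:ℝ) ≤ t)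
        have hr : 1 ≤ t/a := (one_le_div ha).mpr ht1
        nlinarith
  rcases shaped_cases hs with hg | hg | hg | hg
  · -- monotone
    have hga : |g a| = g a := abs_of_nonneg (by rw [← h0]; exact hg ha.le)
    have hgb : |g (-a)| = -(g (-a)) := abs_of_nonpos (by rw [← h0]; exact hg (by linarith))
    rw [hga, hgb] at hm
    rcases le_max_iff.mp hm with h1 | h1
    · left; intro t ⟨ht1, _⟩; exact le_trans h1 (hg ht1)
    · right; right; right; intro t ⟨_, ht2⟩
      have := hg ht2
      linarith
  · -- antitone
    have hga : |g a| = -(g a) := abs_of_nonpos (by rw [← h0]; exact hg ha.le)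
    have hgb : |g (-a)| = g (-a) := abs_of_nonneg (by rw [← h0]; exact hg (by linarith))
    rw [hga, hgb] at hm
    rcases le_max_iff.mp hm with h1 | h1
    · right; right; left; intro t ⟨ht1, _⟩
      have := hg ht1
      linarith
    · right; left; intro t ⟨_, ht2⟩; exact le_trans h1 (hg ht2)
  · rcases hconvex g hg h0 hm with h | h
    · exact Or.inl h
    · exact Or.inr (Or.inl h)
  · have hneg := hg.neg
    have hz : (-g) 0 = 0 := by simp [h0]
    have hmm : m ≤ max |(-g) a| |(-g) (-a)| := by simpa using hm
    rcases hconvex (-g) hneg hz hmm with h | h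
    · right; right; left
      intro t ht
      have := h t ht
      simp only [Pi.neg_apply] at this
      linarith
    · right; right; right
      intro t ht
      have := h t ht
      simp only [Pi.neg_apply] at this
      linarith


def III (a δ : ℝ) : Fin 3 → Set ℝ
  | 0 => Set.Icc (-(2*a)) (-a)
  | 1 => Set.Icc (-δ) δ
  | 2 => Set.Icc a (2*a)

lemma keyD {g : ℝ → ℝ} {a δ m : ℝ} (ha : 0 < a) (hs : Shaped g) (h0 : g 0 = 0)
    (hδ0 : 0 ≤ δ) (hδa : δ ≤ a) (hma : |g a| ≤ m) (hmb : |g (-a)| ≤ m) :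
    ∃ k : Fin 3, ∀ t ∈ III a δ k, -((δ/a) * m) ≤ g t := by
  have hm0 : 0 ≤ m := le_trans (abs_nonneg _) hma
  have hδm : (0:ℝ) ≤ (δ/a) * m := mul_nonneg (div_nonneg hδ0 ha.le) hm0
  rcases shaped_cases hs with hg | hg | hg | hg
  · exact ⟨2, fun t ⟨ht1, _⟩ => by
      have : g 0 ≤ g t := hg (by linarith)
      rw [h0] at this; linarith⟩
  · exact ⟨0, fun t ⟨_, ht2⟩ => by
      have : g 0 ≤ g t := hg (by linarith)
      rw [h0] at this; linarith⟩
  · exact ⟨1, convex_small_lower hg h0 ha hδ0 hδa hma hmb⟩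
  · refine ⟨1, fun t ht => ?_⟩
    have := convex_small_upper hg.neg (by simp [h0]) ha hδ0 hδa
      (by simpa using hma) (by simpa using hmb) t ht
    simp only [Pi.neg_apply] at this
    linarith

lemma keyD' {g : ℝ → ℝ} {a δ m : ℝ} (ha : 0 < a) (hs : Shaped g) (h0 : g 0 = 0)
    (hδ0 : 0 ≤ δ) (hδa : δ ≤ a) (hma : |g a| ≤ m) (hmb : |g (-a)| ≤ m) :
    ∃ k : Fin 3, ∀ t ∈ III a δ k, g t ≤ (δ/a) * m := by
  have hm0 : 0 ≤ m := le_trans (abs_nonneg _) hma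
  have hδm : (0:ℝ) ≤ (δ/a) * m := mul_nonneg (div_nonneg hδ0 ha.le) hm0
  rcases shaped_cases hs with hg | hg | hg | hg
  · exact ⟨0, fun t ⟨_, ht2⟩ => by
      have : g t ≤ g 0 := hg (by linarith)
      rw [h0] at this; linarith⟩
  · exact ⟨2, fun t ⟨ht1, _⟩ => by
      have : g t ≤ g 0 := hg (by linarith)
      rw [h0] at this; linarith⟩
  · exact ⟨1, convex_small_upper hg h0 ha hδ0 hδa hma hmb⟩
  · refine ⟨1, fun t ht => ?_⟩
    have := convex_small_lower hg.neg (by simp [h0]) ha hδ0 hδa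
      (by simpa using hma) (by simpa using hmb) t ht
    simp only [Pi.neg_apply] at this
    linarith

lemma III_compact (a δ : ℝ) (k : Fin 3) : IsCompact (III a δ k) := by
  fin_cases k <;> simp only [III] <;> exact isCompact_Icc

lemma III_subset {a δ : ℝ} (ha : 0 < a) (hδ0 : 0 ≤ δ) (hδa : δ ≤ a) (k : Fin 3) :
    III a δ k ⊆ Set.Icc (-(2*a)) (2*a) := by
  fin_cases k <;> simp only [III] <;> apply Set.Icc_subset_Icc <;> linarith

lemma III_volume {a δ : ℝ} (ha : 0 < a) (hδ0 : 0 ≤ δ) (hδa : δ ≤ a) (k : Fin 3) :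
    ENNReal.ofReal (min a (2*δ)) ≤ volume (III a δ k) := by
  fin_cases k <;> simp only [III, Real.volume_Icc] <;> apply ENNReal.ofReal_le_ofReal
  · have := min_le_left a (2*δ); linarith
  · have := min_le_right a (2*δ); linarith
  · have := min_le_left a (2*δ); linarith

lemma III_disjoint {a δ : ℝ} (ha : 0 < a) (hδ0 : 0 ≤ δ) (hδa : δ < a) {k k' : Fin 3}
    (hkk : k ≠ k') : Disjoint (III a δ k) (III a δ k') := by
  have key : ∀ s t : Set ℝ, (∀ x, x ∈ s → x ∈ t → False) → Disjoint s t := by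
    intro s t h
    rw [Set.disjoint_left]
    intro x hx hx'
    exact h x hx hx'
  fin_cases k <;> fin_cases k' <;> first
    | exact absurd rfl hkk
    | (apply key; rintro x ⟨h1, h2⟩ ⟨h3, h4⟩; simp only [III] at *; linarith)

end Lemma2Aux

set_option maxHeartbeats 1000000

open Lemma2Aux

/-- Lemma 2 of the paper: for `a > 0` there is a finite collection `𝒞` of disjoint
compact subsets of `[−2a,2a]^d`, each of Lebesgue measure at least `(a/(2d))^d`,
such that for every shape-constrained additive function
`f(x) = Σⱼ fⱼ(xⱼ) + c` (each `fⱼ(0) = 0`),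
`max_{C ∈ 𝒞} max (inf_C f) (inf_C (−f)) ≥ (1/4)·max {supⱼ sup_{|xⱼ|≤a} |fⱼ(xⱼ)|, 2|c|}`. -/
theorem exists_collection_additive_lower_bound (d : ℕ) (hd : 1 ≤ d) (a : ℝ) (ha : 0 < a) :
    ∃ 𝒞 : Finset (Set (Fin d → ℝ)),
      (∀ C ∈ 𝒞, IsCompact C ∧
        C ⊆ Set.univ.pi (fun _ => Set.Icc (-(2 * a)) (2 * a)) ∧
        ENNReal.ofReal ((a / (2 * d)) ^ d) ≤ volume C) ∧
      ((𝒞 : Set (Set (Fin d → ℝ)))).Pairwise Disjoint ∧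
      ∀ (f : Fin d → ℝ → ℝ) (c : ℝ),
        (∀ j, Shaped (f j)) → (∀ j, f j 0 = 0) →
        ∃ C ∈ 𝒞,
          (∀ x ∈ C,
            (1 / 4) * max (⨆ j, sSup ((fun t => |f j t|) '' Set.Icc (-a) a)) (2 * |c|)
              ≤ (∑ j, f j (x j)) + c) ∨
          (∀ x ∈ C,
            (1 / 4) * max (⨆ j, sSup ((fun t => |f j t|) '' Set.Icc (-a) a)) (2 * |c|)
              ≤ -((∑ j, f j (x j)) + c)) := by

  classical
  haveI : Nonempty (Fin d) := Fin.pos_iff_nonempty.mp hd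
  have hd1 : (1:ℝ) ≤ (d:ℝ) := by exact_mod_cast hd
  have hdpos : (0:ℝ) < d := by linarith
  set δ : ℝ := a / (4*(d:ℝ)) with hδdef
  have hδ0 : 0 < δ := by positivity
  have hδa : δ < a := by
    rw [hδdef, div_lt_iff₀ (by linarith)]
    nlinarith
  refine ⟨(Finset.univ : Finset (Fin d → Fin 3)).image
      (fun σ => Set.univ.pi fun j => III a δ (σ j)), ?_, ?_, ?_⟩
  · intro C hC
    obtain ⟨σ, _, rfl⟩ := Finset.mem_image.mp hC
    refine ⟨isCompact_univ_pi fun j => III_compact a δ (σ j), ?_, ?_⟩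
    · have h2a : -(2*a) = -(2 * a) := rfl
      exact Set.pi_mono fun j _ => III_subset ha hδ0.le hδa.le (σ j)
    · rw [volume_pi_pi]
      have h1 : ∀ j, ENNReal.ofReal (a/(2*(d:ℝ))) ≤ volume (III a δ (σ j)) := by
        intro j
        have h2 := III_volume ha hδ0.le hδa.le (σ j)
        have hmin : min a (2*δ) = a/(2*(d:ℝ)) := by
          have hq1 : 2*δ = a/(2*(d:ℝ)) := by
            rw [hδdef]; field_simp; ring
          have hq2 : a/(2*(d:ℝ)) ≤ a := by
            rw [div_le_iff₀ (by linarith : (0:ℝ) < 2*(d:ℝ))]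
            nlinarith
          rw [min_eq_right (by linarith), hq1]
        rwa [hmin] at h2
      calc ENNReal.ofReal ((a/(2*(d:ℝ)))^d)
          = (ENNReal.ofReal (a/(2*(d:ℝ))))^d := ENNReal.ofReal_pow (by positivity) d
        _ = ∏ _j : Fin d, ENNReal.ofReal (a/(2*(d:ℝ))) := by
            rw [Finset.prod_const, Finset.card_univ, Fintype.card_fin]
        _ ≤ ∏ j, volume (III a δ (σ j)) := Finset.prod_le_prod' fun j _ => h1 j
  · intro C hC C' hC' hne
    rw [Finset.mem_coe, Finset.mem_image] at hC hC'
    obtain ⟨σ, _, rfl⟩ := hC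
    obtain ⟨τ, _, rfl⟩ := hC'
    have hστ : σ ≠ τ := by rintro rfl; exact hne rfl
    obtain ⟨j, hj⟩ := Function.ne_iff.mp hστ
    rw [Set.disjoint_left]
    intro x hx hx'
    exact Set.disjoint_left.mp (III_disjoint ha hδ0.le hδa hj)
      (Set.mem_univ_pi.mp hx j) (Set.mem_univ_pi.mp hx' j)
  · intro f c hsh h0
    set m : Fin d → ℝ := fun j => sSup ((fun t => |f j t|) '' Set.Icc (-a) a) with hmdef
    have hbound : ∀ j, ∀ t ∈ Set.Icc (-a) a, |f j t| ≤ max |f j a| |f j (-a)| :=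
      fun j => shaped_abs_bound ha (hsh j) (h0 j)
    have hbdd : ∀ j, BddAbove ((fun t => |f j t|) '' Set.Icc (-a) a) := by
      intro j
      exact ⟨max |f j a| |f j (-a)|, by rintro y ⟨t, ht, rfl⟩; exact hbound j t ht⟩
    have hsne : ∀ j, ((fun t => |f j t|) '' Set.Icc (-a) a).Nonempty :=
      fun j => ⟨|f j 0|, ⟨0, ⟨by constructor <;> linarith, rfl⟩⟩⟩
    have hm0 : ∀ j, 0 ≤ m j := by
      intro j
      have h1 : |f j 0| ≤ m j :=
        le_csSup (hbdd j) ⟨0, ⟨by constructor <;> linarith, rfl⟩⟩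
      simpa [h0 j] using h1
    have hma : ∀ j, |f j a| ≤ m j :=
      fun j => le_csSup (hbdd j) ⟨a, ⟨⟨by linarith, le_refl a⟩, rfl⟩⟩
    have hmb : ∀ j, |f j (-a)| ≤ m j :=
      fun j => le_csSup (hbdd j) ⟨-a, ⟨⟨le_refl _, by linarith⟩, rfl⟩⟩
    have hmmax : ∀ j, m j ≤ max |f j a| |f j (-a)| :=
      fun j => csSup_le (hsne j) (by rintro y ⟨t, ht, rfl⟩; exact hbound j t ht)
    set M : ℝ := max (⨆ j, m j) (2*|c|) with hMdef
    have hbddr : BddAbove (Set.range m) := Set.Finite.bddAbove (Set.finite_range m)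
    have hmM : ∀ j, m j ≤ M := fun j => le_trans (le_ciSup hbddr j) (le_max_left _ _)
    have hM0 : 0 ≤ M := le_trans (hm0 (Classical.arbitrary _)) (hmM _)
    have hcM : 2*|c| ≤ M := le_max_right _ _
    set ε : ℝ := M/(4*(d:ℝ)) with hεdef
    have hε0 : 0 ≤ ε := by positivity
    have hdε : (d:ℝ) * ε = M/4 := by
      rw [hεdef]; field_simp
    have hδar : δ/a = 1/(4*(d:ℝ)) := by
      rw [hδdef]; field_simp
    have hδmε : ∀ j, (δ/a) * m j ≤ ε := by
      intro j
      have h4d : (0:ℝ) < 4*(d:ℝ) := by linarith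
      rw [hδar, hεdef, one_div, inv_mul_eq_div, div_le_div_iff₀ h4d h4d]
      have := mul_le_mul_of_nonneg_right (hmM j) h4d.le
      linarith
    have hkeyDl : ∀ j, ∃ k, ∀ t ∈ III a δ k, -ε ≤ f j t := by
      intro j
      obtain ⟨k, hk⟩ := keyD ha (hsh j) (h0 j) hδ0.le hδa.le (hma j) (hmb j)
      exact ⟨k, fun t ht => le_trans (by linarith [hδmε j]) (hk t ht)⟩
    have hkeyDu : ∀ j, ∃ k, ∀ t ∈ III a δ k, f j t ≤ ε := by
      intro j
      obtain ⟨k, hk⟩ := keyD' ha (hsh j) (h0 j) hδ0.le hδa.le (hma j) (hmb j)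
      exact ⟨k, fun t ht => le_trans (hk t ht) (by linarith [hδmε j])⟩
    have hc2 : -(M/2) ≤ c ∧ c ≤ M/2 := by
      have h1 := neg_abs_le c
      have h2 := le_abs_self c
      constructor <;> linarith
    clear_value δ m M ε
    by_cases hcase : (⨆ j, m j) ≤ 2*|c|
    · -- M = 2|c|
      have hMeq : M = 2*|c| := by rw [hMdef]; exact max_eq_right hcase
      rcases le_or_gt 0 c with hc | hc
      · choose σ hσ using hkeyDl
        refine ⟨_, Finset.mem_image_of_mem _ (Finset.mem_univ σ), Or.inl ?_⟩
        intro x hx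
        have hj : ∀ j, -ε ≤ f j (x j) := fun j => hσ j (x j) (Set.mem_univ_pi.mp hx j)
        have hsum : ∑ j : Fin d, (-ε) ≤ ∑ j, f j (x j) := Finset.sum_le_sum fun j _ => hj j
        rw [Finset.sum_const, Finset.card_univ, Fintype.card_fin, nsmul_eq_mul] at hsum
        have habs : |c| = c := abs_of_nonneg hc
        linarith [hdε, hsum, hMeq, habs]
      · choose σ hσ using hkeyDu
        refine ⟨_, Finset.mem_image_of_mem _ (Finset.mem_univ σ), Or.inr ?_⟩
        intro x hx
        have hj : ∀ j, f j (x j) ≤ ε := fun j => hσ j (x j) (Set.mem_univ_pi.mp hx j)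
        have hsum : ∑ j, f j (x j) ≤ ∑ j : Fin d, ε := Finset.sum_le_sum fun j _ => hj j
        rw [Finset.sum_const, Finset.card_univ, Fintype.card_fin, nsmul_eq_mul] at hsum
        have habs : |c| = -c := abs_of_neg hc
        linarith [hdε, hsum, hMeq, habs]
    · -- M = ⨆ m j, attained at j*
      have hlt : 2*|c| < ⨆ j, m j := not_le.mp hcase
      have hMeq : M = ⨆ j, m j := by rw [hMdef]; exact max_eq_left hlt.le
      obtain ⟨j₀, hj₀⟩ := Finite.exists_max m
      have hMj : M ≤ m j₀ := by
        rw [hMeq]; exact ciSup_le hj₀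
      have hB := keyB ha (hsh j₀) (h0 j₀) (hmmax j₀) (hm0 j₀)
      have hIII2 : Set.Icc a (2*a) = III a δ 2 := rfl
      have hIII0 : Set.Icc (-(2*a)) (-a) = III a δ 0 := rfl
      rw [hIII2, hIII0] at hB
      -- helper to finish positive direction
      have pos_case : ∀ k₀ : Fin 3, (∀ t ∈ III a δ k₀, m j₀ ≤ f j₀ t) →
          ∃ C ∈ (Finset.univ : Finset (Fin d → Fin 3)).image
              (fun σ => Set.univ.pi fun j => III a δ (σ j)),
            (∀ x ∈ C, (1/4) * M ≤ (∑ j, f j (x j)) + c) ∨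
            (∀ x ∈ C, (1/4) * M ≤ -((∑ j, f j (x j)) + c)) := by
        intro k₀ hk₀
        choose τ hτ using hkeyDl
        classical
        refine ⟨_, Finset.mem_image_of_mem
          (fun σ => Set.univ.pi fun j => III a δ (σ j))
          (Finset.mem_univ (fun j => if j = j₀ then k₀ else τ j)), Or.inl ?_⟩
        intro x hx
        have hxj := Set.mem_univ_pi.mp hx
        have hℓ : ∀ j, (if j = j₀ then M else -ε) ≤ f j (x j) := by
          intro j
          by_cases hj : j = j₀
          · subst hj
            rw [if_pos rfl]
            have h1 := hk₀ (x j) (by simpa using hxj j)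
            linarith
          · simp only [if_neg hj]
            exact hτ j (x j) (by simpa only [if_neg hj] using hxj j)
        have hsum := Finset.sum_le_sum (fun j (_ : j ∈ Finset.univ) => hℓ j)
        have hcard : ∑ j : Fin d, (if j = j₀ then M else -ε) = M + ((d:ℝ) - 1) * (-ε) := by
          rw [← Finset.add_sum_erase _ _ (Finset.mem_univ j₀)]
          simp only [if_pos rfl]
          congr 1
          rw [Finset.sum_congr rfl (fun j hj => if_neg (Finset.ne_of_mem_erase hj)),
            Finset.sum_const, Finset.card_erase_of_mem (Finset.mem_univ j₀),
            Finset.card_univ, Fintype.card_fin, nsmul_eq_mul]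
          congr 1
          rw [Nat.cast_sub hd]
          simp
        rw [hcard] at hsum
        have harith : ((d:ℝ) - 1) * (-ε) = -(M/4) + ε := by
          have : ((d:ℝ) - 1) * (-ε) = -((d:ℝ) * ε) + ε := by ring
          rw [this, hdε]
        linarith [hc2.1, hε0]
      have neg_case : ∀ k₀ : Fin 3, (∀ t ∈ III a δ k₀, f j₀ t ≤ -(m j₀)) →
          ∃ C ∈ (Finset.univ : Finset (Fin d → Fin 3)).image
              (fun σ => Set.univ.pi fun j => III a δ (σ j)),
            (∀ x ∈ C, (1/4) * M ≤ (∑ j, f j (x j)) + c) ∨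
            (∀ x ∈ C, (1/4) * M ≤ -((∑ j, f j (x j)) + c)) := by
        intro k₀ hk₀
        choose τ hτ using hkeyDu
        classical
        refine ⟨_, Finset.mem_image_of_mem
          (fun σ => Set.univ.pi fun j => III a δ (σ j))
          (Finset.mem_univ (fun j => if j = j₀ then k₀ else τ j)), Or.inr ?_⟩
        intro x hx
        have hxj := Set.mem_univ_pi.mp hx
        have hℓ : ∀ j, f j (x j) ≤ (if j = j₀ then -M else ε) := by
          intro j
          by_cases hj : j = j₀
          · subst hj
            rw [if_pos rfl]
            have h1 := hk₀ (x j) (by simpa using hxj j)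
            linarith
          · simp only [if_neg hj]
            exact hτ j (x j) (by simpa only [if_neg hj] using hxj j)
        have hsum := Finset.sum_le_sum (fun j (_ : j ∈ Finset.univ) => hℓ j)
        have hcard : ∑ j : Fin d, (if j = j₀ then -M else ε) = -M + ((d:ℝ) - 1) * ε := by
          rw [← Finset.add_sum_erase _ _ (Finset.mem_univ j₀)]
          simp only [if_pos rfl]
          congr 1
          rw [Finset.sum_congr rfl (fun j hj => if_neg (Finset.ne_of_mem_erase hj)),
            Finset.sum_const, Finset.card_erase_of_mem (Finset.mem_univ j₀),
            Finset.card_univ, Fintype.card_fin, nsmul_eq_mul]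
          congr 1
          rw [Nat.cast_sub hd]
          simp
        rw [hcard] at hsum
        have harith : ((d:ℝ) - 1) * ε = M/4 - ε := by
          have : ((d:ℝ) - 1) * ε = (d:ℝ) * ε - ε := by ring
          rw [this, hdε]
        linarith [hc2.2, hε0]
      rcases hB with h | h | h | h
      · exact pos_case 2 h
      · exact pos_case 0 h
      · exact neg_case 2 (fun t ht => by linarith [h t ht])
      · exact neg_case 0 (fun t ht => by linarith [h t ht])
end
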